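/- Fix an integer a ≥ 1. Let m ≥ 1 be an integer, let P(Y) ∈ R[Y] be an m-triangular polynomial of degree d, and let k_0, …, k_a ≥ 0 be integers. Then the polynomial P(Y)·Π_{j=0}^{a} (U^{(j)}(Y))^{k_j} is (m + Σ_{j=0}^{a} k_j)-triangular, where U^{(j)} denotes the j-th derivative of U with respect to Y. In particular, if n = Σ_{j=0}^{a} k_j and Σ_{j=0}^{a} j·k_j = n, then this polynomial is (m+n)-triangular of degree d + (a−1)n. -/

import Mathlib

open Polynomial

noncomputable section

/-- The ring `R = ℂ[u₀,…,u_{a−1}][u_a, u_a⁻¹]`: Laurent polynomials in `u_a`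
over the polynomial ring `ℂ[u₀,…,u_{a−1}]`. -/
abbrev LaurentRing (a : ℕ) : Type := LaurentPolynomial (MvPolynomial (Fin a) ℂ)

/-- The generators `u_0, …, u_a` of `R`; `u i` for `i < a` is the polynomial variable `u_i`,
and `u a` is the Laurent variable `u_a`. -/
noncomputable def u (a : ℕ) (i : ℕ) : LaurentRing a :=
  if h : i < a then LaurentPolynomial.C (MvPolynomial.X (⟨i, h⟩ : Fin a))
  else LaurentPolynomial.T 1

/-- `P ∈ R[Y]` is `m`-triangular of degree `d` if `deg P = d ≥ a` and for `d − a ≤ l ≤ d`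
one has `p_l = q_l u_a^{m−1} u_{a−d+l} + P_l` with `q_l ∈ ℚ`, `q_l > 0`, and
`P_l ∈ ℂ[u_{a−d+l+1},…,u_a]`; for `l = d` this means `p_d = q_d u_a^m`. -/
def IsTriangular (a m d : ℕ) (P : Polynomial (LaurentRing a)) : Prop :=
  P.natDegree = d ∧ a ≤ d ∧
  (∃ q : ℚ, 0 < q ∧ P.coeff d = algebraMap ℚ (LaurentRing a) q * (u a a) ^ m) ∧
  (∀ l, d - a ≤ l → l < d →
    ∃ (q : ℚ) (Pl : LaurentRing a), 0 < q ∧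
      Pl ∈ Algebra.adjoin ℂ (u a '' {i : ℕ | a - (d - l) + 1 ≤ i ∧ i ≤ a}) ∧
      P.coeff l = algebraMap ℚ (LaurentRing a) q *
        ((u a a) ^ (m - 1) * u a (a - (d - l))) + Pl)


/-- The polynomial `U(Y) = Σ_{j=0}^{a} u_j Y^j ∈ R[Y]`. -/
noncomputable def Upoly (a : ℕ) : Polynomial (LaurentRing a) :=
  ∑ j ∈ Finset.range (a + 1), Polynomial.C (u a j) * Polynomial.X ^ j

instance instDomainLR (a : ℕ) : IsDomain (LaurentRing a) := NoZeroDivisors.to_isDomain _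
instance instCharZeroLR (a : ℕ) : CharZero (LaurentRing a) :=
  charZero_of_injective_algebraMap (algebraMap ℚ (LaurentRing a)).injective

lemma ua_ne_zero (a : ℕ) : u a a ≠ 0 := by
  rw [u, dif_neg (lt_irrefl a)]
  exact (LaurentPolynomial.isUnit_T 1).ne_zero

lemma algQ_eq (a : ℕ) (q : ℚ) :
    algebraMap ℚ (LaurentRing a) q = algebraMap ℂ (LaurentRing a) ((q : ℂ)) := by
  have h := Subsingleton.elim (algebraMap ℚ (LaurentRing a))
    ((algebraMap ℂ (LaurentRing a)).comp (algebraMap ℚ ℂ))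
  rw [h]; simp

lemma algQ_ne_zero (a : ℕ) {q : ℚ} (hq : q ≠ 0) : algebraMap ℚ (LaurentRing a) q ≠ 0 :=
  fun h => hq ((algebraMap ℚ (LaurentRing a)).injective (h.trans (map_zero _).symm))

/-- The subalgebra `ℂ[u_{a-δ+1},…,u_a]`. -/
noncomputable def SA (a δ : ℕ) : Subalgebra ℂ (LaurentRing a) :=
  Algebra.adjoin ℂ (u a '' {i : ℕ | a - δ + 1 ≤ i ∧ i ≤ a})

lemma SA_mono (a : ℕ) {δ δ' : ℕ} (h : δ ≤ δ') : SA a δ ≤ SA a δ' := by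
  apply Algebra.adjoin_mono
  apply Set.image_mono
  intro i hi
  exact ⟨le_trans (by omega) hi.1, hi.2⟩

lemma u_mem_SA (a : ℕ) {δ i : ℕ} (h1 : a - δ + 1 ≤ i) (h2 : i ≤ a) : u a i ∈ SA a δ :=
  Algebra.subset_adjoin ⟨i, ⟨h1, h2⟩, rfl⟩

lemma rat_mul_mem_SA (a : ℕ) {δ : ℕ} (q : ℚ) {x : LaurentRing a} (hx : x ∈ SA a δ) :
    algebraMap ℚ (LaurentRing a) q * x ∈ SA a δ := by
  rw [algQ_eq, ← Algebra.smul_def]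
  exact (SA a δ).smul_mem hx _

lemma coeff_Upoly (a : ℕ) (i : ℕ) : (Upoly a).coeff i = if i ≤ a then u a i else 0 := by
  rw [Upoly, Polynomial.finset_sum_coeff]
  simp only [Polynomial.coeff_C_mul, Polynomial.coeff_X_pow]
  simp only [mul_ite, mul_one, mul_zero, Finset.sum_ite_eq, Finset.mem_range,
    Nat.lt_add_one_iff]

lemma coeff_iterD (a j t : ℕ) :
    (Polynomial.derivative^[j] (Upoly a)).coeff t =
      ((t + j).descFactorial j : LaurentRing a) *
        (if t + j ≤ a then u a (t + j) else 0) := by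
  rw [Polynomial.coeff_iterate_derivative, coeff_Upoly, nsmul_eq_mul]

lemma descFactorial_cast_ne_zero (a : ℕ) {n j : ℕ} (h : j ≤ n) :
    ((n.descFactorial j : ℕ) : LaurentRing a) ≠ 0 := by
  exact_mod_cast Nat.cast_ne_zero.mpr (fun hz => absurd (Nat.descFactorial_eq_zero_iff_lt.mp hz) (by omega))

lemma natDegree_iterD (a j : ℕ) (hj : j ≤ a) :
    (Polynomial.derivative^[j] (Upoly a)).natDegree = a - j := by
  apply le_antisymm
  · rw [Polynomial.natDegree_le_iff_coeff_eq_zero]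
    intro t ht
    rw [coeff_iterD, if_neg (by omega), mul_zero]
  · apply Polynomial.le_natDegree_of_ne_zero
    rw [coeff_iterD, if_pos (by omega)]
    have h1 : a - j + j = a := by omega
    rw [h1]
    exact mul_ne_zero (descFactorial_cast_ne_zero a hj) (ua_ne_zero a)

lemma iterD_ne_zero (a j : ℕ) (hj : j ≤ a) :
    Polynomial.derivative^[j] (Upoly a) ≠ 0 := by
  intro h
  have := coeff_iterD a j (a - j)
  rw [h] at this
  simp only [Polynomial.coeff_zero] at this
  rw [if_pos (by omega)] at this
  have h1 : a - j + j = a := by omega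
  rw [h1] at this
  exact mul_ne_zero (descFactorial_cast_ne_zero a hj) (ua_ne_zero a) this.symm

lemma coeff_mul_eq (a : ℕ) (P Q : Polynomial (LaurentRing a)) (b l : ℕ) (hb : b ≤ l)
    (hQ : Q.natDegree ≤ b) :
    (P * Q).coeff l = ∑ t ∈ Finset.range (b + 1), P.coeff (l - t) * Q.coeff t := by
  rw [mul_comm P Q, Polynomial.coeff_mul, Finset.Nat.sum_antidiagonal_eq_sum_range_succ_mk]
  rw [← Finset.sum_subset (Finset.range_subset_range.mpr (by omega : b + 1 ≤ l + 1))]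
  · exact Finset.sum_congr rfl fun t _ => mul_comm _ _
  · intro t _ ht
    simp only [Finset.mem_range, Nat.lt_add_one_iff, not_le] at ht
    rw [Polynomial.coeff_eq_zero_of_natDegree_lt (by omega), zero_mul]

lemma sum_decomp (a : ℕ) {ι : Type} (S : Subalgebra ℂ (LaurentRing a)) (X : LaurentRing a)
    (s : Finset ι) (f : ι → LaurentRing a)
    (h : ∀ i ∈ s, ∃ (c : ℚ) (e : LaurentRing a), 0 ≤ c ∧ e ∈ S ∧
      f i = algebraMap ℚ (LaurentRing a) c * X + e) :
    ∃ (c : ℚ) (e : LaurentRing a), 0 ≤ c ∧ e ∈ S ∧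
      ∑ i ∈ s, f i = algebraMap ℚ (LaurentRing a) c * X + e := by
  classical
  induction s using Finset.induction_on with
  | empty => exact ⟨0, 0, le_refl 0, S.zero_mem, by simp⟩
  | insert i s' hns ih =>
    obtain ⟨c1, e1, hc1, he1, hf1⟩ := h i (Finset.mem_insert_self i s')
    obtain ⟨c2, e2, hc2, he2, hf2⟩ := ih fun x hx => h x (Finset.mem_insert_of_mem hx)
    refine ⟨c1 + c2, e1 + e2, by linarith, S.add_mem he1 he2, ?_⟩
    rw [Finset.sum_insert hns, hf1, hf2, map_add]
    ring


lemma step_lemma (a : ℕ) (ha : 1 ≤ a) (m : ℕ) (hm : 1 ≤ m) (d j : ℕ) (hj : j ≤ a)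
    (P : Polynomial (LaurentRing a)) (hP : IsTriangular a m d P) :
    IsTriangular a (m + 1) (d + (a - j)) (P * Polynomial.derivative^[j] (Upoly a)) := by
  obtain ⟨hdeg, had, ⟨q, hq, hqd⟩, hmid⟩ := hP
  set Q := Polynomial.derivative^[j] (Upoly a) with hQ
  set b := a - j with hb
  have hQdeg : Q.natDegree = b := natDegree_iterD a j hj
  have hPne : P ≠ 0 := by
    intro h
    rw [h, Polynomial.coeff_zero] at hqd
    exact mul_ne_zero (algQ_ne_zero a hq.ne') (pow_ne_zero _ (ua_ne_zero a)) hqd.symm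
  have hQne : Q ≠ 0 := iterD_ne_zero a j hj
  have hbj : b + j = a := by omega
  refine ⟨?_, by omega, ?_, ?_⟩
  · rw [Polynomial.natDegree_mul hPne hQne, hdeg, hQdeg]
  · -- top coefficient
    have htop : (P * Q).coeff (d + b) = P.coeff d * Q.coeff b := by
      have h := Polynomial.coeff_mul_degree_add_degree P Q
      rwa [hdeg, hQdeg, Polynomial.leadingCoeff, Polynomial.leadingCoeff, hdeg, hQdeg] at h
    set c : ℕ := a.descFactorial j with hc
    refine ⟨q * c, ?_, ?_⟩
    · have : 0 < c := Nat.pos_of_ne_zero (fun hz => absurd (Nat.descFactorial_eq_zero_iff_lt.mp hz) (by omega))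
      positivity
    · rw [htop, hqd, coeff_iterD, hbj, if_pos (le_refl a)]
      rw [map_mul, map_natCast]
      ring
  · -- middle coefficients
    intro l hl1 hl2
    set δ := d + b - l with hδ
    have hδ1 : 1 ≤ δ := by omega
    have hδa : δ ≤ a := by omega
    have hbl : b ≤ l := by omega
    rw [coeff_mul_eq a P Q b l hbl (le_of_eq hQdeg), Finset.sum_range_succ]
    simp only [Nat.add_sub_cancel]
    set X : LaurentRing a := (u a a) ^ m * u a (a - δ) with hX
    -- decompose the sum over range b
    have hsum : ∃ (c0 : ℚ) (e0 : LaurentRing a), 0 ≤ c0 ∧ e0 ∈ SA a δ ∧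
        ∑ t ∈ Finset.range b, P.coeff (l - t) * Q.coeff t =
          algebraMap ℚ (LaurentRing a) c0 * X + e0 := by
      apply sum_decomp
      intro t ht
      rw [Finset.mem_range] at ht
      have htj : t + j ≤ a := by omega
      rw [coeff_iterD, if_pos htj]
      set rt : ℕ := (t + j).descFactorial j with hrt
      rcases lt_trichotomy (t + δ) b with hcase | hcase | hcase
      · -- s > d : coefficient of P is zero
        refine ⟨0, 0, le_refl 0, (SA a δ).zero_mem, ?_⟩
        rw [Polynomial.coeff_eq_zero_of_natDegree_lt (by rw [hdeg]; omega)]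
        simp
      · -- s = d
        have hld : l - t = d := by omega
        have haj : t + j = a - δ := by omega
        refine ⟨q * rt, 0, by positivity, (SA a δ).zero_mem, ?_⟩
        rw [hld, hqd, haj, map_mul, map_natCast, add_zero, hX]
        ring
      · -- d - a ≤ s < d
        set δt := δ + t - b with hδt
        have hs : l - t = d - δt := by omega
        have hδt1 : 1 ≤ δt := by omega
        have hδtδ : δt < δ := by omega
        obtain ⟨q2, P2, hq2, hP2mem, hP2⟩ := hmid (d - δt) (by omega) (by omega)
        have hdd : d - (d - δt) = δt := by omega
        rw [hdd] at hP2mem hP2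
        rw [hs, hP2]
        refine ⟨0, _, le_refl 0, ?_, by rw [map_zero, zero_mul, zero_add]⟩
        have hP2' : P2 ∈ SA a δ := SA_mono a (le_of_lt hδtδ) hP2mem
        have hu1 : u a (a - δt) ∈ SA a δ := u_mem_SA a (by omega) (by omega)
        have hu2 : u a (t + j) ∈ SA a δ := u_mem_SA a (by omega) htj
        have hua : u a a ∈ SA a δ := u_mem_SA a (by omega) (le_refl a)
        have hrtmem : ((rt : ℕ) : LaurentRing a) ∈ SA a δ := Subalgebra.natCast_mem _ _
        exact (SA a δ).mul_mem
          ((SA a δ).add_mem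
            (rat_mul_mem_SA a q2 ((SA a δ).mul_mem ((SA a δ).pow_mem hua (m-1)) hu1))
            hP2')
          ((SA a δ).mul_mem hrtmem hu2)
    -- handle the top term t = b and combine
    obtain ⟨c0, e0, hc0, he0, hsum_eq⟩ := hsum
    obtain ⟨q1, P1, hq1, hP1mem, hP1⟩ := hmid (d - δ) (by omega) (by omega)
    have hdd : d - (d - δ) = δ := by omega
    rw [hdd] at hP1mem hP1
    have hlb : l - b = d - δ := by omega
    set c : ℕ := a.descFactorial j with hc
    have hcpos : 0 < c :=
      Nat.pos_of_ne_zero (fun hz => absurd (Nat.descFactorial_eq_zero_iff_lt.mp hz) (by omega))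
    have hpow : (u a a) ^ (m - 1) * u a a = (u a a) ^ m := by
      rw [← pow_succ]; congr 1; omega
    have hua : u a a ∈ SA a δ := u_mem_SA a (by omega) (le_refl a)
    refine ⟨c0 + q1 * c, e0 + P1 * ((c : LaurentRing a) * u a a), ?_, ?_, ?_⟩
    · have : (0:ℚ) < (c:ℚ) := by exact_mod_cast hcpos
      positivity
    · exact (SA a δ).add_mem he0
        ((SA a δ).mul_mem hP1mem ((SA a δ).mul_mem (Subalgebra.natCast_mem _ _) hua))
    · rw [hsum_eq, hlb, hP1, coeff_iterD, hbj, if_pos (le_refl a), map_add, map_mul,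
        map_natCast, hX, ← hpow]
      ring

lemma pow_lemma (a : ℕ) (ha : 1 ≤ a) (j : ℕ) (hj : j ≤ a) (kk : ℕ) :
    ∀ (m d : ℕ), 1 ≤ m → ∀ P : Polynomial (LaurentRing a), IsTriangular a m d P →
    IsTriangular a (m + kk) (d + (a - j) * kk)
      (P * (Polynomial.derivative^[j] (Upoly a)) ^ kk) := by
  induction kk with
  | zero => intro m d hm P hP; simpa using hP
  | succ n ih =>
    intro m d hm P hP
    have h1 := ih m d hm P hP
    have h2 := step_lemma a ha (m + n) (by omega) (d + (a - j) * n) j hj _ h1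
    have e1 : m + (n + 1) = m + n + 1 := by omega
    have e2 : d + (a - j) * (n + 1) = d + (a - j) * n + (a - j) := by ring
    have e3 : P * (Polynomial.derivative^[j] (Upoly a)) ^ (n + 1) =
        P * (Polynomial.derivative^[j] (Upoly a)) ^ n *
          Polynomial.derivative^[j] (Upoly a) := by ring
    rw [e1, e2, e3]
    exact h2

lemma prod_lemma (a : ℕ) (ha : 1 ≤ a) (k : ℕ → ℕ) (s : Finset ℕ) (hs : ∀ j ∈ s, j ≤ a) :
    ∀ m d : ℕ, 1 ≤ m → ∀ P : Polynomial (LaurentRing a), IsTriangular a m d P →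
    IsTriangular a (m + ∑ j ∈ s, k j) (d + ∑ j ∈ s, (a - j) * k j)
      (P * ∏ j ∈ s, (Polynomial.derivative^[j] (Upoly a)) ^ (k j)) := by
  classical
  induction s using Finset.induction_on with
  | empty => intro m d hm P hP; simpa using hP
  | insert j s' hns ih =>
    intro m d hm P hP
    have hj : j ≤ a := hs j (Finset.mem_insert_self j s')
    have h1 := pow_lemma a ha j hj (k j) m d hm P hP
    have h2 := ih (fun x hx => hs x (Finset.mem_insert_of_mem hx)) (m + k j)
      (d + (a - j) * k j) (by omega) _ h1
    rw [Finset.sum_insert hns, Finset.sum_insert hns, Finset.prod_insert hns,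
      ← mul_assoc, ← add_assoc, ← add_assoc]
    exact h2


/-- if `P` is `m`-triangular of degree `d` and `k_0,…,k_a ≥ 0` are integers,
then `P(Y)·Π_{j=0}^{a} (U^{(j)}(Y))^{k_j}` is `(m + Σ k_j)`-triangular (its degree being
`d + Σ (a−j)·k_j`).  In particular, if `n = Σ_{j=0}^{a} k_j` and `Σ_{j=0}^{a} j·k_j = n`,
this polynomial is `(m+n)`-triangular of degree `d + (a−1)·n`. -/
theorem mul_prod_derivatives_isTriangular (a : ℕ) (ha : 1 ≤ a) (m : ℕ) (hm : 1 ≤ m) (d : ℕ)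
    (P : Polynomial (LaurentRing a)) (hP : IsTriangular a m d P) (k : ℕ → ℕ) :
    IsTriangular a (m + ∑ j ∈ Finset.range (a + 1), k j)
      (d + ∑ j ∈ Finset.range (a + 1), (a - j) * k j)
      (P * ∏ j ∈ Finset.range (a + 1), (Polynomial.derivative^[j] (Upoly a)) ^ (k j)) ∧
    ∀ n : ℕ, (∑ j ∈ Finset.range (a + 1), k j) = n →
      (∑ j ∈ Finset.range (a + 1), j * k j) = n →
      IsTriangular a (m + n) (d + (a - 1) * n)
        (P * ∏ j ∈ Finset.range (a + 1), (Polynomial.derivative^[j] (Upoly a)) ^ (k j)) := by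
  have first := prod_lemma a ha k (Finset.range (a + 1))
    (fun j hj => by simp only [Finset.mem_range] at hj; omega) m d hm P hP
  refine ⟨first, ?_⟩
  intro n hn1 hn2
  have key : ∑ j ∈ Finset.range (a + 1), (a - j) * k j = (a - 1) * n := by
    have h : ∑ j ∈ Finset.range (a + 1), ((a - j) * k j + j * k j) =
        ∑ j ∈ Finset.range (a + 1), a * k j := by
      refine Finset.sum_congr rfl fun j hj => ?_
      simp only [Finset.mem_range] at hj
      rw [← add_mul, Nat.sub_add_cancel (by omega)]
    rw [Finset.sum_add_distrib, hn2, ← Finset.mul_sum, hn1] at h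
    have h2 : (a - 1) * n = a * n - n := Nat.sub_one_mul a n
    omega
  rw [hn1, key] at first
  exact first
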